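/- For the actSIS risk-tolerator model, if β̄ < β̄_c = δ / max_{p∈[0,1]}(φᵀ(p)(1−p)), then there are no endemic equilibria, while if β̄ > β̄_c there exist at least two endemic equilibria p* ∈ (0,1) satisfying φᵀ(p*)(1−p*) = δ/β̄. -/
import Mathlib


/-- actSIS risk-tolerators: below the critical rate β̄_c there are no endemic
equilibria; above β̄_c there are at least two. -/
theorem actSIS_tolerator_saddle_node (δ β : ℝ) (hδ : 0 < δ) (hβ : 0 < β)
    (g : ℝ → ℝ) (phat : ℝ) (hphat : phat ∈ Set.Ioo (0 : ℝ) 1)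
    (hcont : ContinuousOn g (Set.Icc 0 1))
    (hg0 : g 0 = 0) (hg1 : g 1 = 0) (hgpos : 0 < g phat)
    (hinc : StrictMonoOn g (Set.Icc 0 phat))
    (hdec : StrictAntiOn g (Set.Icc phat 1))
    (βc : ℝ) (hβc : βc = δ / g phat) :
    (β < βc → ¬∃ p ∈ Set.Ioo (0 : ℝ) 1, g p = δ / β) ∧
    (β > βc → ∃ p₁ ∈ Set.Ioo (0 : ℝ) 1, ∃ p₂ ∈ Set.Ioo (0 : ℝ) 1,
      p₁ ≠ p₂ ∧ g p₁ = δ / β ∧ g p₂ = δ / β) := by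
  obtain ⟨hp0, hp1⟩ := hphat
  constructor
  · intro hlt ⟨p, ⟨hq0, hq1⟩, hgp⟩
    -- δ/β > g phat
    have hgt : g phat < δ / β := by
      rw [hβc] at hlt
      rw [lt_div_iff₀ hβ]
      calc g phat * β < g phat * (δ / g phat) := by
            exact (mul_lt_mul_iff_right₀ hgpos).mpr hlt
        _ = δ := by field_simp
    -- g p ≤ g phat
    have hle : g p ≤ g phat := by
      rcases le_total p phat with h | h
      · rcases eq_or_lt_of_le h with rfl | h'
        · exact le_rfl
        · exact le_of_lt (hinc ⟨le_of_lt hq0, h⟩ ⟨hp0.le, le_rfl⟩ h')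
      · rcases eq_or_lt_of_le h with h' | h'
        · exact le_of_eq (by rw [h'])
        · exact le_of_lt (hdec ⟨le_rfl, hp1.le⟩ ⟨h, hq1.le⟩ h')
    rw [hgp] at hle
    exact absurd hle (not_le.mpr hgt)
  · intro hgtc
    have hcval : 0 < δ / β := div_pos hδ hβ
    have hlt : δ / β < g phat := by
      rw [hβc] at hgtc
      rw [div_lt_iff₀ hβ]
      calc δ = g phat * (δ / g phat) := by field_simp
        _ < g phat * β := (mul_lt_mul_iff_right₀ hgpos).mpr hgtc
    have hcont1 : ContinuousOn g (Set.Icc 0 phat) :=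
      hcont.mono (Set.Icc_subset_Icc le_rfl hp1.le)
    have hcont2 : ContinuousOn g (Set.Icc phat 1) :=
      hcont.mono (Set.Icc_subset_Icc hp0.le le_rfl)
    have h1 : (δ / β) ∈ Set.Ioo (g 0) (g phat) := by
      rw [hg0]; exact ⟨hcval, hlt⟩
    obtain ⟨p₁, hp₁, hgp₁⟩ := intermediate_value_Ioo hp0.le hcont1 h1
    have h2 : (δ / β) ∈ Set.Ioo (g 1) (g phat) := by
      rw [hg1]; exact ⟨hcval, hlt⟩
    obtain ⟨p₂, hp₂, hgp₂⟩ := intermediate_value_Ioo' hp1.le hcont2 h2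
    refine ⟨p₁, ⟨hp₁.1, hp₁.2.trans hp1⟩, p₂, ⟨hp0.trans hp₂.1, hp₂.2⟩,
      ne_of_lt (hp₁.2.trans hp₂.1), hgp₁, hgp₂⟩
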